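/- For any function f : Fin (N+1) → ℂ and any matrix g : Fin (N+1) × Fin N → ℂ, the sum over all permutations σ of {1,...,N+1} of sgn(σ) · f(σ(N+1)) · ∏_{j=1}^N g(σ(j), j) equals the value at α = 0 of (f(N+1) + ∂/∂α) applied to det_{1≤j,k≤N}(g(j,k) − α·f(j)·g(N+1,k)). Equivalently, ∑_{σ ∈ S_{N+1}} sgn(σ) f(σ(N+1)) ∏_{j=1}^N g(σ(j),j) = f(N+1)·det_{1≤j,k≤N}(g(j,k)) − ∑_{m=1}^N det of the matrix obtained from (g(j,k)) by replacing its m-th row-contribution with f(j)·g(N+1,k). -/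

import Mathlib

open scoped BigOperators


theorem stmt0 (N : ℕ) (f : Fin (N + 1) → ℂ) (g : Fin (N + 1) × Fin N → ℂ) :
    ∑ σ : Equiv.Perm (Fin (N + 1)),
        ((Equiv.Perm.sign σ : ℤ) : ℂ) * f (σ (Fin.last N)) *
          ∏ j : Fin N, g (σ j.castSucc, j)
    = f (Fin.last N) *
        Matrix.det (Matrix.of fun j k : Fin N => g (j.castSucc, k))
      + deriv (fun α : ℂ =>
          Matrix.det (Matrix.of fun j k : Fin N =>
            g (j.castSucc, k) - α * f j.castSucc * g (Fin.last N, k))) 0 := by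
  classical
  -- Step 1: compute the derivative term explicitly.
  have hder : deriv (fun α : ℂ =>
          Matrix.det (Matrix.of fun j k : Fin N =>
            g (j.castSucc, k) - α * f j.castSucc * g (Fin.last N, k))) 0
      = ∑ τ : Equiv.Perm (Fin N), ((Equiv.Perm.sign τ : ℤ) : ℂ) *
          ∑ m : Fin N, (∏ k ∈ Finset.univ.erase m, g ((τ k).castSucc, k)) *
            -(f ((τ m).castSucc) * g (Fin.last N, m)) := by
    have h1 : (fun α : ℂ =>
          Matrix.det (Matrix.of fun j k : Fin N =>
            g (j.castSucc, k) - α * f j.castSucc * g (Fin.last N, k)))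
        = fun α : ℂ => ∑ τ : Equiv.Perm (Fin N), ((Equiv.Perm.sign τ : ℤ) : ℂ) *
            ∏ k : Fin N,
              (g ((τ k).castSucc, k) - α * f ((τ k).castSucc) * g (Fin.last N, k)) := by
      funext α
      rw [Matrix.det_apply']
      rfl
    rw [h1]
    have hd : HasDerivAt (fun α : ℂ => ∑ τ : Equiv.Perm (Fin N), ((Equiv.Perm.sign τ : ℤ) : ℂ) *
            ∏ k : Fin N,
              (g ((τ k).castSucc, k) - α * f ((τ k).castSucc) * g (Fin.last N, k)))
        (∑ τ : Equiv.Perm (Fin N), ((Equiv.Perm.sign τ : ℤ) : ℂ) *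
          ∑ m : Fin N, (∏ k ∈ Finset.univ.erase m,
              (g ((τ k).castSucc, k) - 0 * f ((τ k).castSucc) * g (Fin.last N, k))) •
            -(f ((τ m).castSucc) * g (Fin.last N, m))) 0 := by
      apply HasDerivAt.fun_sum
      intro τ _
      apply HasDerivAt.const_mul
      apply HasDerivAt.fun_finsetProd
        (f := fun (m : Fin N) (α : ℂ) =>
          g ((τ m).castSucc, m) - α * f ((τ m).castSucc) * g (Fin.last N, m))
        (f' := fun m : Fin N => -(f ((τ m).castSucc) * g (Fin.last N, m)))
      intro m _
      have h2 : HasDerivAt (fun α : ℂ => α * f ((τ m).castSucc) * g (Fin.last N, m))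
          (f ((τ m).castSucc) * g (Fin.last N, m)) 0 := by
        simpa using ((hasDerivAt_id (0 : ℂ)).mul_const (f ((τ m).castSucc))).mul_const
          (g (Fin.last N, m))
      simpa using (hasDerivAt_const (0 : ℂ) (g ((τ m).castSucc, m))).fun_sub h2
    rw [hd.deriv]
    simp [smul_eq_mul]
  rw [hder]
  -- Step 2: reindex the sum over permutations of `Fin (N+1)`.
  set E : Option (Fin N) × Equiv.Perm (Fin N) ≃ Equiv.Perm (Fin (N + 1)) :=
    Equiv.Perm.decomposeOption.symm.trans (finSuccEquivLast.symm.permCongr) with hE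
  have hlast : ∀ (x : Option (Fin N)) (τ : Equiv.Perm (Fin N)),
      E (x, τ) (Fin.last N) = finSuccEquivLast.symm x := by
    intro x τ
    simp [hE, Equiv.permCongr_apply, Equiv.Perm.decomposeOption_symm_apply,
      Equiv.Perm.mul_apply]
  have hcast : ∀ (x : Option (Fin N)) (τ : Equiv.Perm (Fin N)) (k : Fin N),
      E (x, τ) (Fin.castSucc k) = finSuccEquivLast.symm (Equiv.swap none x (some (τ k))) := by
    intro x τ k
    simp [hE, Equiv.permCongr_apply, Equiv.Perm.decomposeOption_symm_apply,
      Equiv.Perm.mul_apply]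
  have hsign : ∀ (x : Option (Fin N)) (τ : Equiv.Perm (Fin N)),
      Equiv.Perm.sign (E (x, τ)) = Equiv.Perm.sign (Equiv.swap none x) * Equiv.Perm.sign τ := by
    intro x τ
    simp [hE, Equiv.Perm.sign_permCongr, Equiv.Perm.decomposeOption_symm_apply]
  rw [← Equiv.sum_comp E (fun σ => ((Equiv.Perm.sign σ : ℤ) : ℂ) * f (σ (Fin.last N)) *
      ∏ j : Fin N, g (σ j.castSucc, j)), Fintype.sum_prod_type, Fintype.sum_option]
  congr 1
  · -- the `none` part gives `f (last) * det g`
    rw [Matrix.det_apply', Finset.mul_sum]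
    refine Finset.sum_congr rfl fun τ _ => ?_
    rw [hlast, hsign]
    have : ∀ k : Fin N, E (none, τ) (Fin.castSucc k) = Fin.castSucc (τ k) := by
      intro k; rw [hcast]; simp [Equiv.swap_apply_of_ne_of_ne]
    simp only [this, Equiv.swap_self, Equiv.Perm.sign_refl, one_mul,
      finSuccEquivLast_symm_none, Matrix.of_apply]
    ring
  · -- the `some` part gives the derivative
    rw [Finset.sum_comm]
    refine Finset.sum_congr rfl fun τ _ => ?_
    rw [Finset.mul_sum]
    refine Fintype.sum_equiv τ.symm _ _ fun m => ?_
    have hc : ∀ k : Fin N, E (some m, τ) (Fin.castSucc k)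
        = if τ k = m then Fin.last N else Fin.castSucc (τ k) := by
      intro k
      rw [hcast]
      by_cases h : τ k = m
      · simp [h]
      · rw [Equiv.swap_apply_of_ne_of_ne (by simp) (by simpa using h)]
        simp [h]
    have hprod : (∏ j : Fin N, g (E (some m, τ) j.castSucc, j))
        = g (Fin.last N, τ.symm m) *
          ∏ j ∈ Finset.univ.erase (τ.symm m), g ((τ j).castSucc, j) := by
      simp only [hc]
      rw [← Finset.mul_prod_erase Finset.univ _ (Finset.mem_univ (τ.symm m))]
      congr 1
      · simp
      · refine Finset.prod_congr rfl fun j hj => ?_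
        have : τ j ≠ m := by
          intro h
          exact (Finset.mem_erase.mp hj).1 (by simp [← h])
        simp [this]
    rw [hprod, hlast, hsign]
    have hm : τ (τ.symm m) = m := τ.apply_symm_apply m
    simp only [finSuccEquivLast_symm_some, hm]
    have hsw : Equiv.Perm.sign (Equiv.swap (none : Option (Fin N)) (some m)) = -1 :=
      Equiv.Perm.sign_swap (by simp)
    rw [hsw]
    push_cast
    ring
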